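/- Let Y be a finite nonempty subset of (0,1). Then there exist a continuous v : ℝ → ℝ, a finite set C ⊆ (0,1) with C ∩ Y = ∅ such that v is distance-preserving on every subset of [0,1] whose convex hull contains no point of C, and a real c, such that {p ∈ Set.Icc (0:ℝ) 1 ×ˢ Set.Icc (0:ℝ) 1 : v p.2 = c} = Set.Icc (0:ℝ) 1 ×ˢ Y. -/

import Mathlib

/-- `f` preserves distances between points of `S`. -/
def DistPreservingOn (f : ℝ → ℝ) (S : Set ℝ) : Prop :=
  ∀ x ∈ S, ∀ y ∈ S, |f x - f y| = |x - y|

/-- Accordion fold sending every point of the sorted list `l` to `0`. -/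
noncomputable def acc : List ℝ → ℝ → ℝ
  | [], t => t
  | [a], t => t - a
  | a :: b :: l, t => if t ≤ (a + b) / 2 then t - a else -(acc (b :: l) t)

/-- Midpoints between consecutive entries. -/
noncomputable def mids : List ℝ → List ℝ
  | [] => []
  | [_] => []
  | a :: b :: l => (a + b) / 2 :: mids (b :: l)

@[simp] lemma mids_nil : mids [] = [] := rfl
@[simp] lemma mids_single (a : ℝ) : mids [a] = [] := rfl
@[simp] lemma mids_cons_cons (a b : ℝ) (l : List ℝ) :
    mids (a :: b :: l) = (a + b) / 2 :: mids (b :: l) := rfl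

lemma acc_left (b : ℝ) (l : List ℝ) (hl : (b :: l).Pairwise (· < ·)) {t : ℝ}
    (ht : t ≤ b) : acc (b :: l) t = t - b := by
  cases l with
  | nil => simp [acc]
  | cons c l' =>
    have hbc : b < c := (List.pairwise_cons.1 hl).1 c (List.mem_cons_self)
    simp only [acc]
    rw [if_pos (by linarith)]

lemma acc_cont (l : List ℝ) (hl : l.Pairwise (· < ·)) : Continuous (acc l) := by
  induction l with
  | nil => simpa [acc] using continuous_id'
  | cons a l ih =>
    cases l with
    | nil => simpa [acc] using (continuous_sub_right a)
    | cons b l' =>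
      have hab : a < b := (List.pairwise_cons.1 hl).1 b (List.mem_cons_self)
      have htail : (b :: l').Pairwise (· < ·) := (List.pairwise_cons.1 hl).2
      have ih' : Continuous (acc (b :: l')) := ih htail
      have : Continuous fun t : ℝ =>
          if t ≤ (a + b) / 2 then t - a else -(acc (b :: l') t) := by
        refine Continuous.if_le (continuous_id.sub continuous_const) ih'.neg
          continuous_id continuous_const ?_
        intro t ht
        rw [acc_left b l' htail (by linarith)]
        linarith
      convert this using 1
      funext t; simp only [acc]

lemma acc_eq_zero (l : List ℝ) (hl : l.Pairwise (· < ·)) (hne : l ≠ []) (t : ℝ) :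
    acc l t = 0 ↔ t ∈ l := by
  induction l with
  | nil => exact absurd rfl hne
  | cons a l ih =>
    cases l with
    | nil => simp [acc, sub_eq_zero]
    | cons b l' =>
      have hab : a < b := (List.pairwise_cons.1 hl).1 b (List.mem_cons_self)
      have htail : (b :: l').Pairwise (· < ·) := (List.pairwise_cons.1 hl).2
      have hbig : ∀ x ∈ b :: l', (a + b) / 2 < x := by
        intro x hx
        rcases List.mem_cons.1 hx with rfl | hx
        · linarith
        · have := (List.pairwise_cons.1 htail).1 x hx
          linarith
      simp only [acc]
      by_cases h : t ≤ (a + b) / 2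
      · rw [if_pos h]
        constructor
        · intro h0
          have : t = a := by linarith [sub_eq_zero.1 h0]
          simp [this]
        · intro hmem
          rcases List.mem_cons.1 hmem with rfl | hmem
          · ring
          · exact absurd h (not_le.2 (hbig t hmem))
      · rw [if_neg h]
        rw [neg_eq_zero, ih htail (by simp)]
        constructor
        · intro hmem; exact List.mem_cons.2 (Or.inr hmem)
        · intro hmem
          rcases List.mem_cons.1 hmem with rfl | hmem
          · exact absurd (le_of_lt (by linarith : t < (t + b) / 2)) h
          · exact hmem

lemma acc_dist (l : List ℝ) {x y : ℝ} (hxy : x ≤ y)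
    (h : ∀ m ∈ mids l, m ∉ Set.Icc x y) : |acc l x - acc l y| = |x - y| := by
  induction l with
  | nil => simp [acc]
  | cons a l ih =>
    cases l with
    | nil => simp [acc]
    | cons b l' =>
      have hm : (a + b) / 2 ∉ Set.Icc x y := h _ (by
        rw [mids_cons_cons]; exact List.mem_cons_self)
      simp only [acc]
      rcases le_or_gt y ((a + b) / 2) with hy | hy
      · rw [if_pos (le_trans hxy hy), if_pos hy]
        congr 1; ring
      · rcases le_or_gt x ((a + b) / 2) with hx | hx
        · exact absurd ⟨hx, le_of_lt hy⟩ hm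
        · rw [if_neg (not_le.2 hx), if_neg (not_le.2 hy)]
          have := ih (fun m hm' => h m (by
            rw [mids_cons_cons]; exact List.mem_cons.2 (Or.inr hm')))
          calc |-(acc (b :: l') x) - -(acc (b :: l') y)|
              = |acc (b :: l') x - acc (b :: l') y| := by
                rw [← abs_neg]; congr 1; ring
            _ = |x - y| := this

lemma mids_mem (l : List ℝ) (hl : l.Pairwise (· < ·)) (m : ℝ) (hm : m ∈ mids l) :
    (∃ a ∈ l, a < m) ∧ (∃ b ∈ l, m < b) ∧ m ∉ l := by
  induction l with
  | nil => simp at hm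
  | cons a l ih =>
    cases l with
    | nil => simp at hm
    | cons b l' =>
      have hab : a < b := (List.pairwise_cons.1 hl).1 b (List.mem_cons_self)
      have htail : (b :: l').Pairwise (· < ·) := (List.pairwise_cons.1 hl).2
      have hbig : ∀ x ∈ b :: l', b ≤ x := by
        intro x hx
        rcases List.mem_cons.1 hx with rfl | hx
        · exact le_refl _
        · exact le_of_lt ((List.pairwise_cons.1 htail).1 x hx)
      rw [mids_cons_cons] at hm
      rcases List.mem_cons.1 hm with rfl | hm
      · refine ⟨⟨a, List.mem_cons_self, by linarith⟩,
          ⟨b, List.mem_cons.2 (Or.inr (List.mem_cons_self)), by linarith⟩, ?_⟩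
        intro hmem
        rcases List.mem_cons.1 hmem with heq | hmem
        · linarith [heq]
        · have := hbig _ hmem; linarith
      · obtain ⟨⟨a', ha', ha'm⟩, ⟨b', hb', hmb'⟩, hnotin⟩ := ih htail hm
        have ham : a < m := lt_of_le_of_lt (le_trans (le_of_lt hab) (hbig _ ha')) ha'm
        refine ⟨⟨a', List.mem_cons.2 (Or.inr ha'), ha'm⟩,
          ⟨b', List.mem_cons.2 (Or.inr hb'), hmb'⟩, ?_⟩
        intro hmem
        rcases List.mem_cons.1 hmem with rfl | hmem
        · exact absurd ham (lt_irrefl _)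
        · exact hnotin hmem

theorem horizontal_cuts_solvable
    (Y : Set ℝ) (hYfin : Y.Finite) (hYne : Y.Nonempty)
    (hYsub : Y ⊆ Set.Ioo (0:ℝ) 1) :
    ∃ (v : ℝ → ℝ) (C : Set ℝ) (c : ℝ),
      Continuous v ∧
      C.Finite ∧ C ⊆ Set.Ioo (0:ℝ) 1 ∧ C ∩ Y = ∅ ∧
      (∀ S : Set ℝ, S ⊆ Set.Icc (0:ℝ) 1 → (convexHull ℝ S) ∩ C = ∅ →
        DistPreservingOn v S) ∧
      {p ∈ Set.Icc (0:ℝ) 1 ×ˢ Set.Icc (0:ℝ) 1 | v p.2 = c}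
        = Set.Icc (0:ℝ) 1 ×ˢ Y := by
  classical
  set l : List ℝ := hYfin.toFinset.sort (· ≤ ·) with hldef
  have hsort : l.Pairwise (· < ·) := (Finset.sortedLT_sort _).pairwise
  have hmem : ∀ x, x ∈ l ↔ x ∈ Y := by
    intro x
    rw [hldef, Finset.mem_sort, Set.Finite.mem_toFinset]
  have hne : l ≠ [] := by
    obtain ⟨y0, hy0⟩ := hYne
    intro h
    have := (hmem y0).2 hy0
    rw [h] at this
    exact List.not_mem_nil this
  refine ⟨acc l, {x | x ∈ mids l}, 0, acc_cont l hsort, (mids l).finite_toSet, ?_, ?_, ?_, ?_⟩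
  · intro m hm
    obtain ⟨⟨a, ha, ham⟩, ⟨b, hb, hmb⟩, _⟩ := mids_mem l hsort m hm
    have ha' := hYsub ((hmem a).1 ha)
    have hb' := hYsub ((hmem b).1 hb)
    exact ⟨lt_trans ha'.1 ham, lt_trans hmb hb'.2⟩
  · ext m
    simp only [Set.mem_inter_iff, Set.mem_setOf_eq, Set.mem_empty_iff_false, iff_false,
      not_and]
    intro hm hmY
    exact (mids_mem l hsort m hm).2.2 ((hmem m).2 hmY)
  · intro S hS hC x hx y hy
    have key : ∀ a b : ℝ, a ≤ b → a ∈ S → b ∈ S → |acc l a - acc l b| = |a - b| := by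
      intro a b hab haS hbS
      refine acc_dist l hab ?_
      intro m hm hmab
      have hseg : m ∈ convexHull ℝ S := by
        have := segment_subset_convexHull (𝕜 := ℝ) haS hbS
        rw [segment_eq_Icc (𝕜 := ℝ) hab] at this
        exact this hmab
      have : m ∈ convexHull ℝ S ∩ {x | x ∈ mids l} := ⟨hseg, hm⟩
      rw [hC] at this
      exact this
    rcases le_total x y with h | h
    · exact key x y h hx hy
    · rw [abs_sub_comm, abs_sub_comm x y]
      exact key y x h hy hx
  · ext p
    simp only [Set.mem_setOf_eq, Set.mem_prod]
    constructor
    · rintro ⟨⟨h1, h2⟩, h0⟩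
      exact ⟨h1, (hmem p.2).1 ((acc_eq_zero l hsort hne p.2).1 h0)⟩
    · rintro ⟨h1, h2⟩
      refine ⟨⟨h1, Set.Ioo_subset_Icc_self (hYsub h2)⟩,
        (acc_eq_zero l hsort hne p.2).2 ((hmem p.2).2 h2)⟩
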